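/- (Pathwise form of Proposition 1.) The total return of the augmented trajectory equals the product of safety indicators along the original trajectory up to step N: Σ_{k=0}^∞ r(S_k) = ∏_{j=0}^{N} 𝟙[x_j ∈ C]. In particular the total return takes only the values 0 or 1. -/
import Mathlib


open scoped Classical

/-- A pair `(h, y)` is absorbing iff `h < 0` or `y ∉ C`. -/
def IsAbsorbing {𝒳 : Type*} (C : Set 𝒳) (s : ℝ × 𝒳) : Prop :=
  s.1 < 0 ∨ s.2 ∉ C

/-- Reward: `1` if `0 ≤ h < Δt` and `(h, y)` is not absorbing, else `0`. -/
noncomputable def reward {𝒳 : Type*} (C : Set 𝒳) (Δt : ℝ) (s : ℝ × 𝒳) : ℝ :=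
  if 0 ≤ s.1 ∧ s.1 < Δt ∧ ¬ IsAbsorbing C s then 1 else 0

/-- The augmented trajectory built from a realized trajectory `x`. -/
noncomputable def augTraj {𝒳 : Type*} (C : Set 𝒳) (Δt τ : ℝ) (x : ℕ → 𝒳) : ℕ → ℝ × 𝒳
  | 0 => (τ, x 0)
  | k + 1 =>
      if IsAbsorbing C (augTraj C Δt τ x k) then augTraj C Δt τ x k
      else ((augTraj C Δt τ x k).1 - Δt, x (k + 1))

lemma reward_of_abs {𝒳 : Type*} (C : Set 𝒳) (Δt : ℝ) {s : ℝ × 𝒳}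
    (h : IsAbsorbing C s) : reward C Δt s = 0 := by
  simp [reward, h]

lemma aug_abs_persist {𝒳 : Type*} (C : Set 𝒳) (Δt τ : ℝ) (x : ℕ → 𝒳) {k : ℕ}
    (h : IsAbsorbing C (augTraj C Δt τ x k)) :
    ∀ m, k ≤ m → augTraj C Δt τ x m = augTraj C Δt τ x k := by
  intro m hm
  induction m with
  | zero => obtain rfl : k = 0 := Nat.le_zero.mp hm; rfl
  | succ n ih =>
      rcases Nat.lt_or_ge n k with h1 | h1
      · obtain rfl : k = n + 1 := by omega
        rfl
      · have hn := ih h1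
        rw [augTraj, hn, if_pos h]

lemma aug_val {𝒳 : Type*} (C : Set 𝒳) (Δt τ : ℝ) (x : ℕ → 𝒳) {k : ℕ}
    (h : ∀ j < k, ¬ IsAbsorbing C (augTraj C Δt τ x j)) :
    augTraj C Δt τ x k = (τ - k * Δt, x k) := by
  induction k with
  | zero => simp [augTraj]
  | succ n ih =>
      have hn := ih (fun j hj => h j (Nat.lt_succ_of_lt hj))
      rw [augTraj, if_neg (h n (Nat.lt_succ_self n)), hn]
      simp only [Prod.mk.injEq]
      refine ⟨by push_cast; ring, by trivial⟩

/-- pathwise form of Proposition 1: the total return equals the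
product of the safety indicators `𝟙[x j ∈ C]` for `j = 0, …, N`, with
`N = ⌊τ/Δt⌋`; in particular it is `0` or `1`. -/
theorem stmt_3 {𝒳 : Type*} (C : Set 𝒳) (Δt τ : ℝ) (hΔt : 0 < Δt) (hτ : 0 ≤ τ)
    (x : ℕ → 𝒳) :
    (∑' k : ℕ, reward C Δt (augTraj C Δt τ x k) =
      ∏ j ∈ Finset.range (⌊τ / Δt⌋₊ + 1), (if x j ∈ C then (1 : ℝ) else 0)) ∧
    (∑' k : ℕ, reward C Δt (augTraj C Δt τ x k) = 0 ∨
      ∑' k : ℕ, reward C Δt (augTraj C Δt τ x k) = 1) := by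
  set N := ⌊τ / Δt⌋₊ with hN
  -- arithmetic facts
  have hle : ∀ k : ℕ, k ≤ N → (k : ℝ) * Δt ≤ τ := by
    intro k hk
    have h1 : (k : ℝ) ≤ τ / Δt := by
      exact_mod_cast (Nat.le_floor_iff (div_nonneg hτ hΔt.le)).mp hk
    exact (le_div_iff₀ hΔt).mp h1
  have hN1 : τ < ((N : ℝ) + 1) * Δt := by
    have h1 : τ / Δt < (N : ℝ) + 1 := by
      have := Nat.lt_floor_add_one (τ / Δt)
      push_cast at this ⊢
      linarith
    exact (div_lt_iff₀ hΔt).mp h1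
  by_cases hall : ∀ j ≤ N, x j ∈ C
  · -- everything safe up to N : total return = 1
    have hval : ∀ k, k ≤ N →
        augTraj C Δt τ x k = (τ - k * Δt, x k) ∧
          ¬ IsAbsorbing C (augTraj C Δt τ x k) := by
      intro k
      induction k using Nat.strong_induction_on with
      | _ k ih =>
        intro hk
        have hv : augTraj C Δt τ x k = (τ - k * Δt, x k) :=
          aug_val C Δt τ x (fun j hj => (ih j hj (le_trans hj.le hk)).2)
        refine ⟨hv, ?_⟩
        rw [hv]
        rintro (h1 | h2)
        · have h1' : τ - (k : ℝ) * Δt < 0 := h1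
          have := hle k hk
          linarith
        · exact h2 (hall k hk)
    have habsN1 : IsAbsorbing C (augTraj C Δt τ x (N + 1)) := by
      have hv : augTraj C Δt τ x (N + 1) = (τ - (N + 1 : ℕ) * Δt, x (N + 1)) :=
        aug_val C Δt τ x (fun j hj => (hval j (Nat.lt_succ_iff.mp hj)).2)
      rw [hv]
      exact Or.inl (show τ - ((N : ℕ) + 1 : ℕ) * Δt < 0 by push_cast; linarith)
    have hzero : ∀ k, k ≠ N → reward C Δt (augTraj C Δt τ x k) = 0 := by
      intro k hk
      rcases Nat.lt_or_ge k N with h1 | h1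
      · have hv := (hval k h1.le).1
        rw [hv, reward, if_neg]
        rintro ⟨-, h2, -⟩
        have h2' : τ - (k : ℝ) * Δt < Δt := h2
        have : ((k : ℝ) + 1) * Δt ≤ τ := by
          have := hle (k + 1) h1
          push_cast at this
          linarith
        linarith
      · have h2 : N + 1 ≤ k := by omega
        rw [aug_abs_persist C Δt τ x habsN1 k h2]
        exact reward_of_abs C Δt habsN1
    have hone : reward C Δt (augTraj C Δt τ x N) = 1 := by
      obtain ⟨hv, hna⟩ := hval N le_rfl
      rw [hv] at hna ⊢
      rw [reward, if_pos]
      refine ⟨show (0:ℝ) ≤ τ - (N : ℝ) * Δt from ?_, show τ - (N : ℝ) * Δt < Δt from ?_, hna⟩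
      · have := hle N le_rfl
        linarith
      · linarith
    have hsum : (∑' k : ℕ, reward C Δt (augTraj C Δt τ x k)) = 1 := by
      rw [tsum_eq_single N hzero, hone]
    have hprod : (∏ j ∈ Finset.range (N + 1), (if x j ∈ C then (1 : ℝ) else 0)) = 1 :=
      Finset.prod_eq_one fun j hj =>
        if_pos (hall j (Nat.lt_succ_iff.mp (Finset.mem_range.mp hj)))
    exact ⟨hsum.trans hprod.symm, Or.inr hsum⟩
  · -- some unsafe state before N : total return = 0
    push_neg at hall
    have hex : ∃ j, j ≤ N ∧ x j ∉ C := hall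
    set j₀ := Nat.find hex with hj₀def
    obtain ⟨hj₀N, hj₀C⟩ := Nat.find_spec hex
    have hmin : ∀ i < j₀, x i ∈ C := by
      intro i hi
      have := Nat.find_min hex hi
      push_neg at this
      exact this (le_trans (Nat.le_of_lt hi) hj₀N)
    have hval : ∀ k, k < j₀ →
        augTraj C Δt τ x k = (τ - k * Δt, x k) ∧
          ¬ IsAbsorbing C (augTraj C Δt τ x k) := by
      intro k
      induction k using Nat.strong_induction_on with
      | _ k ih =>
        intro hk
        have hv : augTraj C Δt τ x k = (τ - k * Δt, x k) :=
          aug_val C Δt τ x (fun j hj => (ih j hj (lt_trans hj hk)).2)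
        refine ⟨hv, ?_⟩
        rw [hv]
        rintro (h1 | h2)
        · have h1' : τ - (k : ℝ) * Δt < 0 := h1
          have := hle k (le_trans hk.le hj₀N)
          linarith
        · exact h2 (hmin k hk)
    have habs : IsAbsorbing C (augTraj C Δt τ x j₀) := by
      have hv : augTraj C Δt τ x j₀ = (τ - j₀ * Δt, x j₀) :=
        aug_val C Δt τ x (fun j hj => (hval j hj).2)
      rw [hv]
      right
      exact hj₀C
    have hzero : ∀ k, reward C Δt (augTraj C Δt τ x k) = 0 := by
      intro k
      rcases Nat.lt_or_ge k j₀ with h1 | h1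
      · have hv := (hval k h1).1
        rw [hv, reward, if_neg]
        rintro ⟨-, h2, -⟩
        have h2' : τ - (k : ℝ) * Δt < Δt := h2
        have : ((k : ℝ) + 1) * Δt ≤ τ := by
          have := hle (k + 1) (le_trans h1 hj₀N)
          push_cast at this
          linarith
        linarith
      · rw [aug_abs_persist C Δt τ x habs k h1]
        exact reward_of_abs C Δt habs
    have hsum : (∑' k : ℕ, reward C Δt (augTraj C Δt τ x k)) = 0 := by
      calc (∑' k : ℕ, reward C Δt (augTraj C Δt τ x k))
          = ∑' _ : ℕ, (0 : ℝ) := tsum_congr hzero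
        _ = 0 := tsum_zero
    have hprod : (∏ j ∈ Finset.range (N + 1), (if x j ∈ C then (1 : ℝ) else 0)) = 0 :=
      Finset.prod_eq_zero (Finset.mem_range.mpr (Nat.lt_succ_of_le hj₀N)) (if_neg hj₀C)
    exact ⟨hsum.trans hprod.symm, Or.inl hsum⟩
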